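/- arXiv:2101.04403 — 6 statements merged into one kernel-verified Lean document; each statement's English description precedes it below -/
import Mathlib

section
/- A set of paths P is k-identifiable if and only if every node u is k-identifiable with respect to P (i.e., for all node sets U, W of size at most k with U ∩ {u} ≠ W ∩ {u}, we have P(U) ≠ P(W)). -/
def pathsOf {n m : ℕ} (P : Fin n → Finset (Fin m)) (U : Finset (Fin n)) : Finset (Fin m) :=
  U.biUnion P

def Identifiable {n m : ℕ} (P : Fin n → Finset (Fin m)) (k : ℕ) : Prop :=
  ∀ U W : Finset (Fin n), U.card ≤ k → W.card ≤ k → U ≠ W → pathsOf P U ≠ pathsOf P W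

/-- A node `u` is `k`-identifiable with respect to `P`. -/
def NodeIdentifiable {n m : ℕ} (P : Fin n → Finset (Fin m)) (k : ℕ) (u : Fin n) : Prop :=
  ∀ U W : Finset (Fin n), U.card ≤ k → W.card ≤ k → U ∩ {u} ≠ W ∩ {u} →
    pathsOf P U ≠ pathsOf P W

theorem identifiable_iff_forall_node {n m : ℕ} (P : Fin n → Finset (Fin m)) (k : ℕ) :
    Identifiable P k ↔ ∀ u : Fin n, NodeIdentifiable P k u := by
  constructor
  · intro h u U W hU hW hne
    exact h U W hU hW (fun e => hne (by rw [e]))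
  · intro h U W hU hW hne
    have : ∃ u, U ∩ {u} ≠ W ∩ {u} := by
      by_contra hc
      push_neg at hc
      apply hne
      ext u
      have := Finset.ext_iff.mp (hc u) u
      simpa using this
    obtain ⟨u, hu⟩ := this
    exact h u U W hU hW hu
end

section
/- Let P be a set of m paths over n nodes. Then the number of 1-identifiable nodes satisfies |ID₁(P)| ≤ min(n, 2^m − 1). -/
theorem card_ID_one_le {n m : ℕ} (P : Fin n → Finset (Fin m))
    (hne : ∀ u, (P u).Nonempty) :
    {u : Fin n | NodeIdentifiable P 1 u}.ncard ≤ min n (2 ^ m - 1) := by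
  refine le_min ?_ ?_
  · calc {u : Fin n | NodeIdentifiable P 1 u}.ncard
        ≤ (Set.univ : Set (Fin n)).ncard :=
          Set.ncard_le_ncard (Set.subset_univ _) (Set.finite_univ)
      _ = n := by simp [Set.ncard_univ]
  · have h : {u : Fin n | NodeIdentifiable P 1 u}.ncard ≤
        ({S : Finset (Fin m) | S.Nonempty}).ncard := by
      apply Set.ncard_le_ncard_of_injOn P
      · intro u hu
        exact hne u
      · intro u hu w hw hPuw
        by_contra hne'
        apply hu {u} {w} (by simp) (by simp)
          (by simp [Finset.singleton_inter_of_notMem, Ne.symm hne', hne'])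
        simpa [pathsOf] using hPuw

    refine h.trans ?_
    have : ({S : Finset (Fin m) | S.Nonempty}) = Set.univ \ {∅} := by
      ext S; simp [Finset.nonempty_iff_ne_empty]
    rw [this, Set.ncard_diff (by simp), Set.ncard_univ, Set.ncard_singleton]
    simp [Fintype.card_finset]
end

section
/- If a node u is k-separable in P, then u is k-identifiable in P. -/
/-- A node `u` is `k`-separable in `P`. -/
def Separable {n m : ℕ} (P : Fin n → Finset (Fin m)) (k : ℕ) (u : Fin n) : Prop :=
  ∀ U : Finset (Fin n), U.card ≤ k → u ∉ U → ∃ p ∈ P u, p ∉ pathsOf P U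

theorem identifiable_of_separable {n m k : ℕ} (P : Fin n → Finset (Fin m)) (u : Fin n)
    (h : Separable P k u) : NodeIdentifiable P k u := by
  have key : ∀ U W : Finset (Fin n), U.card ≤ k → W.card ≤ k → u ∈ U → u ∉ W →
      pathsOf P U ≠ pathsOf P W := by
    intro U W _ hW huU huW heq
    obtain ⟨p, hpu, hpW⟩ := h W hW huW
    apply hpW
    rw [← heq]
    exact Finset.mem_biUnion.mpr ⟨u, huU, hpu⟩
  intro U W hU hW hne
  by_cases huU : u ∈ U <;> by_cases huW : u ∈ W
  · exact absurd (by simp [Finset.inter_comm, huU, huW]) hne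
  · exact key U W hU hW huU huW
  · exact fun e => key W U hW hU huW huU e.symm
  · exact absurd (by simp [Finset.inter_comm, huU, huW]) hne
end

section
/- Define V₁ = [n] and V_k = [n] \ ⋃_{j<k} E_{V_j,j}, where E_{V,k} is the set of nodes u ∈ V that are k-equal modulo 𝒫 to some W ∈ 𝕎(u) of size ≤ k, and set τ_k = |E_{V_k,k}|. Then the sets E_{V_1,1}, E_{V_2,2}, …, E_{V_k,k} are pairwise disjoint, each E_{V_j,j} ⊆ complement of DIS_j(P), and |DIS_k(P)| ≤ n − ∑_{j=1}^{k} τ_j. -/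
/-- `u` is `k`-equal to `W` modulo `Q`. -/
def KEqualMod {n : ℕ} {α : Type*} (P : Fin n → Set α) (Q : Fin n → Fin n → Set α)
    (u : Fin n) (W : Finset (Fin n)) : Prop :=
  (∃ w ∈ W, ∃ w' ∈ W, P u \ Q u w ⊆ P w') ∧ ∀ w ∈ W, P w \ Q u w ⊆ P u

/-- `E_{V,k}`: nodes of `V` that are `k`-equal modulo `Q` to some eligible `W ∈ 𝕎(u)`. -/
def ESet {n : ℕ} {α : Type*} (P : Fin n → Set α) (Q : Fin n → Fin n → Set α)
    (Wfam : Fin n → Set (Finset (Fin n))) (V : Set (Fin n)) (k : ℕ) : Set (Fin n) :=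
  {u | u ∈ V ∧ ∃ W ∈ Wfam u, W.Nonempty ∧ u ∉ W ∧ W.card ≤ k ∧ KEqualMod P Q u W}

/-- The set of `k`-distinguishable nodes. -/
def DisSet {n : ℕ} {α : Type*} (P : Fin n → Set α) (k : ℕ) : Set (Fin n) :=
  {u | ∀ U : Finset (Fin n), U.card ≤ k → u ∉ U → P u ≠ ⋃ w ∈ U, P w}

theorem dis_upper_bound_tau {n : ℕ} {α : Type*} (P : Fin n → Set α)
    (Q : Fin n → Fin n → Set α) (hQ : ∀ u w, Q u w ⊆ P u ∩ P w)
    (Wfam : Fin n → Set (Finset (Fin n))) (k : ℕ)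
    (Vs : ℕ → Set (Fin n))
    (hVs : ∀ j : ℕ, Vs j = Set.univ \ ⋃ i ∈ Finset.Ico 1 j, ESet P Q Wfam (Vs i) i) :
    (Set.Pairwise ↑(Finset.Icc 1 k)
        fun i j => Disjoint (ESet P Q Wfam (Vs i) i) (ESet P Q Wfam (Vs j) j)) ∧
    (∀ j ∈ Finset.Icc 1 k, ESet P Q Wfam (Vs j) j ⊆ (DisSet P j)ᶜ) ∧
    (DisSet P k).ncard ≤ n - ∑ j ∈ Finset.Icc 1 k, (ESet P Q Wfam (Vs j) j).ncard := by
  classical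
  set E : ℕ → Set (Fin n) := fun j => ESet P Q Wfam (Vs j) j with hE
  have hdisj : ∀ i j : ℕ, 1 ≤ i → i < j → Disjoint (E i) (E j) := by
    intro i j h1 hij
    rw [Set.disjoint_left]
    intro u hui huj
    have hVj : u ∈ Vs j := huj.1
    rw [hVs j] at hVj
    exact hVj.2 (Set.mem_iUnion₂.mpr ⟨i, Finset.mem_Ico.mpr ⟨h1, hij⟩, hui⟩)
  have hsub : ∀ j, 1 ≤ j → E j ⊆ (DisSet P j)ᶜ := by
    intro j hj u hu hdis
    obtain ⟨-, W, -, hWne, huW, hWcard, ⟨⟨w, hw, w', hw', h1⟩, h2⟩⟩ := hu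
    apply hdis W hWcard huW
    apply Set.Subset.antisymm
    · intro x hx
      by_cases hxq : x ∈ Q u w
      · exact Set.mem_iUnion₂.mpr ⟨w, hw, (hQ u w hxq).2⟩
      · exact Set.mem_iUnion₂.mpr ⟨w', hw', h1 ⟨hx, hxq⟩⟩
    · intro x hx
      obtain ⟨v, hv, hxv⟩ := Set.mem_iUnion₂.mp hx
      by_cases hxq : x ∈ Q u v
      · exact (hQ u v hxq).1
      · exact h2 v hv ⟨hxv, hxq⟩
  have hpair : Set.Pairwise ↑(Finset.Icc 1 k)
      fun i j => Disjoint (ESet P Q Wfam (Vs i) i) (ESet P Q Wfam (Vs j) j) := by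
    intro i hi j hj hij
    rcases lt_or_gt_of_ne hij with h | h
    · exact hdisj i j (Finset.mem_Icc.mp (by exact_mod_cast hi)).1 h
    · exact (hdisj j i (Finset.mem_Icc.mp (by exact_mod_cast hj)).1 h).symm
  refine ⟨hpair, fun j hj => hsub j (Finset.mem_Icc.mp hj).1, ?_⟩
  -- each E j is contained in the complement of DisSet k
  have hcompl : ∀ j ∈ Finset.Icc 1 k, E j ⊆ (DisSet P k)ᶜ := by
    intro j hj u hu hdk
    exact hsub j (Finset.mem_Icc.mp hj).1 hu
      (fun U hU hnU => hdk U (hU.trans (Finset.mem_Icc.mp hj).2) hnU)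
  set F : ℕ → Finset (Fin n) := fun j => (E j).toFinite.toFinset with hF
  have hsum : ∑ j ∈ Finset.Icc 1 k, (E j).ncard = ((Finset.Icc 1 k).biUnion F).card := by
    rw [Finset.card_biUnion]
    · exact Finset.sum_congr rfl fun j _ => Set.ncard_eq_toFinset_card _ _
    · intro i hi j hj hij
      rw [hF]
      simp only [Set.Finite.disjoint_toFinset]
      rcases lt_or_gt_of_ne hij with h | h
      · exact hdisj i j (Finset.mem_Icc.mp hi).1 h
      · exact (hdisj j i (Finset.mem_Icc.mp hj).1 h).symm
  have hunion : (Finset.Icc 1 k).biUnion F ⊆ ((DisSet P k)ᶜ).toFinite.toFinset := by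
    intro u hu
    obtain ⟨j, hj, hju⟩ := Finset.mem_biUnion.mp hu
    rw [Set.Finite.mem_toFinset]
    exact hcompl j hj ((E j).toFinite.mem_toFinset.mp hju)
  have hle := Finset.card_le_card hunion
  have hc1 : ((DisSet P k)ᶜ).toFinite.toFinset.card = ((DisSet P k)ᶜ).ncard :=
    (Set.ncard_eq_toFinset_card _ _).symm
  have hc2 : (DisSet P k).ncard + ((DisSet P k)ᶜ).ncard = n := by
    have := Set.ncard_add_ncard_compl (DisSet P k)
    simpa using this
  have hsum' : ∑ j ∈ Finset.Icc 1 k, (ESet P Q Wfam (Vs j) j).ncard =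
      ((Finset.Icc 1 k).biUnion F).card := hsum
  omega
end

section
/- Given a hypergraph H = (V, E) (an instance of minimum hitting set), construct the path instance P over node set V ∪ {u} (u a fresh node) with path set E, where each node v ∈ V touches exactly the edges containing it and u touches every edge. Then a set W ⊆ V satisfies P(u) ⊆ P(W) if and only if W is a hitting set (transversal) of H. Consequently, u fails to be |W|-separable in P exactly when W is a hitting set of H. -/
theorem mhs_reduction {V : Type*} [DecidableEq V] (E : Finset (Finset V))
    (hE : ∀ e ∈ E, e.Nonempty)
    (P : Option V → Set {e // e ∈ E})
    (hPv : ∀ v : V, P (some v) = {e : {e // e ∈ E} | v ∈ e.val})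
    (hPu : P none = Set.univ) :
    (∀ W : Finset V, (P none ⊆ ⋃ w ∈ W, P (some w)) ↔ ∀ e ∈ E, (W ∩ e).Nonempty) ∧
    (∀ k : ℕ,
      (¬ ∀ W : Finset V, W.card ≤ k → ∃ p ∈ P none, p ∉ ⋃ w ∈ W, P (some w)) ↔
        ∃ W : Finset V, W.card ≤ k ∧ ∀ e ∈ E, (W ∩ e).Nonempty) := by
  have key : ∀ W : Finset V,
      (P none ⊆ ⋃ w ∈ W, P (some w)) ↔ ∀ e ∈ E, (W ∩ e).Nonempty := by
    intro W
    constructor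
    · intro h e he
      have : (⟨e, he⟩ : {e // e ∈ E}) ∈ ⋃ w ∈ W, P (some w) := by
        apply h; rw [hPu]; trivial
      rcases Set.mem_iUnion₂.mp this with ⟨w, hw, hmem⟩
      rw [hPv] at hmem
      exact ⟨w, Finset.mem_inter.mpr ⟨hw, hmem⟩⟩
    · intro h p _
      rcases h p.1 p.2 with ⟨w, hw⟩
      rcases Finset.mem_inter.mp hw with ⟨hwW, hwe⟩
      exact Set.mem_iUnion₂.mpr ⟨w, hwW, by rw [hPv]; exact hwe⟩
  refine ⟨key, fun k => ?_⟩
  push_neg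
  constructor
  · rintro ⟨W, hWk, hW⟩
    refine ⟨W, hWk, (key W).mp ?_⟩
    intro p hp
    by_contra hc
    exact hc (hW p hp)
  · rintro ⟨W, hWk, hW⟩
    exact ⟨W, hWk, fun p hp => ((key W).mpr hW) hp⟩
end

section
/- If every r-regular k-union-free hypergraph on vertex set [m] has at most f(r) edges, and P is a k-identifiable set of m paths over n nodes, then n ≤ ∑_{r=1}^{m} f(r). -/
def UnionFree {m : ℕ} (k : ℕ) (F : Finset (Finset (Fin m))) : Prop :=
  ∀ A B : Finset (Finset (Fin m)), A ⊆ F → B ⊆ F → A.Nonempty → B.Nonempty →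
    A.card ≤ k → B.card ≤ k → A ≠ B → A.sup id ≠ B.sup id

theorem nodes_le_sum_unionFree_bound {n m k : ℕ} (f : ℕ → ℕ)
    (hf : ∀ r : ℕ, ∀ F : Finset (Finset (Fin m)),
      (∀ A ∈ F, A.card = r) → UnionFree k F → F.card ≤ f r)
    (P : Fin n → Finset (Fin m)) (hinj : Function.Injective P)
    (hne : ∀ u, (P u).Nonempty) (hid : Identifiable P k) :
    n ≤ ∑ r ∈ Finset.Icc 1 m, f r := by
  classical
  set F : Finset (Finset (Fin m)) := Finset.univ.image P with hF
  have hcardF : F.card = n := by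
    rw [hF, Finset.card_image_of_injective _ hinj, Finset.card_univ, Fintype.card_fin]
  have himg : ∀ A : Finset (Finset (Fin m)), A ⊆ F →
      (Finset.univ.filter (fun u => P u ∈ A)).image P = A := by
    intro A hA
    apply Finset.Subset.antisymm
    · intro x hx
      simp only [Finset.mem_image, Finset.mem_filter, Finset.mem_univ, true_and] at hx
      obtain ⟨u, hu, rfl⟩ := hx
      exact hu
    · intro a ha
      have : a ∈ F := hA ha
      simp only [hF, Finset.mem_image, Finset.mem_univ, true_and] at this
      obtain ⟨u, rfl⟩ := this
      simp only [Finset.mem_image, Finset.mem_filter, Finset.mem_univ, true_and]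
      exact ⟨u, ha, rfl⟩
  have hUF : UnionFree k F := by
    intro A B hA hB _ _ hAk hBk hABne
    set U := Finset.univ.filter (fun u => P u ∈ A) with hU
    set W := Finset.univ.filter (fun u => P u ∈ B) with hW
    have hUA : U.image P = A := himg A hA
    have hWB : W.image P = B := himg B hB
    have hUcard : U.card = A.card := by rw [← hUA, Finset.card_image_of_injective _ hinj]
    have hWcard : W.card = B.card := by rw [← hWB, Finset.card_image_of_injective _ hinj]
    have hUW : U ≠ W := by
      intro h
      apply hABne
      rw [← hUA, ← hWB, h]
    have := hid U W (hUcard ▸ hAk) (hWcard ▸ hBk) hUW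
    intro hsup
    apply this
    have e1 : pathsOf P U = A.sup id := by
      rw [pathsOf, ← Finset.sup_eq_biUnion, ← hUA, Finset.sup_image]
      rfl
    have e2 : pathsOf P W = B.sup id := by
      rw [pathsOf, ← Finset.sup_eq_biUnion, ← hWB, Finset.sup_image]
      rfl
    rw [e1, e2, hsup]
  have hsum : n = ∑ r ∈ Finset.Icc 1 m, (F.filter fun A => A.card = r).card := by
    rw [← hcardF]
    apply Finset.card_eq_sum_card_fiberwise
    intro A hA
    simp only [Finset.mem_coe, hF, Finset.mem_image, Finset.mem_univ, true_and] at hA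
    obtain ⟨u, rfl⟩ := hA
    simp only [Finset.mem_coe, Finset.mem_Icc]
    exact ⟨Finset.card_pos.2 (hne u), (Finset.card_le_univ _).trans_eq (by simp)⟩
  rw [hsum]
  apply Finset.sum_le_sum
  intro r _
  apply hf r
  · intro A hA; exact (Finset.mem_filter.mp hA).2
  · intro A B hA hB
    exact hUF A B (hA.trans (Finset.filter_subset _ _)) (hB.trans (Finset.filter_subset _ _))
end
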